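/- Let A ∈ ℝ^{N×N}. There exists a pair (B, C) ∈ ℂ^{M×N} × ℂ^{N×M} with rank B = N and CB = I_N such that BAC is anti-hermitian if and only if A is diagonalizable over ℂ with all eigenvalues purely imaginary. -/

import Mathlib

open Matrix Polynomial
set_option maxHeartbeats 1000000
set_option synthInstance.maxHeartbeats 200000

lemma aux_intertwine {m n : ℕ} (S : Matrix (Fin m) (Fin m) ℂ) (T : Matrix (Fin n) (Fin n) ℂ)
    (B : Matrix (Fin m) (Fin n) ℂ) (h : S * B = B * T) (p : Polynomial ℂ) :
    Polynomial.aeval S p * B = B * Polynomial.aeval T p := by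
  have hpow : ∀ k : ℕ, S ^ k * B = B * T ^ k := by
    intro k
    induction k with
    | zero => simp
    | succ k ih =>
      rw [pow_succ, pow_succ, Matrix.mul_assoc, h, ← Matrix.mul_assoc, ih, Matrix.mul_assoc]
  rw [Polynomial.aeval_eq_sum_range S, Polynomial.aeval_eq_sum_range T,
    Matrix.sum_mul, Matrix.mul_sum]
  refine Finset.sum_congr rfl fun i _ => ?_
  rw [Matrix.smul_mul, Matrix.mul_smul, hpow]

lemma aux_diag {N : ℕ} (T : Matrix (Fin N) (Fin N) ℂ) (p : Polynomial ℂ)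
    (hsq : Squarefree p) (h0 : Polynomial.aeval T p = 0) :
    ∃ P : Matrix (Fin N) (Fin N) ℂ, IsUnit P.det ∧
      ∃ d : Fin N → ℂ, P⁻¹ * T * P = Matrix.diagonal d := by
  classical
  set f : Module.End ℂ (Fin N → ℂ) := Matrix.toLinAlgEquiv' T with hf
  have h0' : Polynomial.aeval f p = 0 := by
    have h := Polynomial.aeval_algHom_apply
      (Matrix.toLinAlgEquiv' (R := ℂ) (n := Fin N)).toAlgHom T p
    rw [h0, map_zero] at h
    exact h
  have hss : f.IsSemisimple := Module.End.isSemisimple_of_squarefree_aeval_eq_zero hsq h0'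
  have htop : ⨆ μ : ℂ, f.eigenspace μ = ⊤ := by
    have h := Module.End.iSup_maxGenEigenspace_eq_top f
    rw [← h]
    exact iSup_congr fun μ =>
      (hss.isFinitelySemisimple.maxGenEigenspace_eq_eigenspace μ).symm
  have hint : DirectSum.IsInternal (fun μ : ℂ => f.eigenspace μ) :=
    DirectSum.isInternal_submodule_of_iSupIndep_of_iSup_eq_top f.eigenspaces_iSupIndep htop
  let v : ∀ μ : ℂ, Module.Basis (Fin (Module.finrank ℂ (f.eigenspace μ))) ℂ (f.eigenspace μ) :=
    fun μ => Module.finBasis ℂ _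
  let b0 := hint.collectedBasis v
  haveI : Fintype (Σ μ : ℂ, Fin (Module.finrank ℂ (f.eigenspace μ))) :=
    FiniteDimensional.fintypeBasisIndex b0
  have hcard : Fintype.card (Σ μ : ℂ, Fin (Module.finrank ℂ (f.eigenspace μ))) = N := by
    rw [← Module.finrank_eq_card_basis b0]
    simp
  let e := Fintype.equivFinOfCardEq hcard
  let b := b0.reindex e
  let d : Fin N → ℂ := fun j => (e.symm j).1
  have hkey : ∀ j, T.mulVec (b j) = d j • b j := by
    intro j
    have hmem : b j ∈ f.eigenspace ((e.symm j).1) := by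
      rw [Module.Basis.reindex_apply]
      exact hint.collectedBasis_mem v _
    have h1 := Module.End.mem_eigenspace_iff.mp hmem
    have h2 : f (b j) = T *ᵥ (b j) := Matrix.toLinAlgEquiv'_apply T (b j)
    rw [← h2]
    exact h1
  set P : Matrix (Fin N) (Fin N) ℂ := (Pi.basisFun ℂ (Fin N)).toMatrix ⇑b with hP
  haveI : Invertible P := (Pi.basisFun ℂ (Fin N)).invertibleToMatrix b
  have hdet : IsUnit P.det := (Matrix.isUnit_iff_isUnit_det P).mp (isUnit_of_invertible P)
  have hPij : ∀ i j, P i j = b j i := by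
    intro i j
    rw [hP, Module.Basis.toMatrix_apply, Pi.basisFun_repr]
  have hTP : T * P = P * Matrix.diagonal d := by
    ext i j
    rw [Matrix.mul_diagonal]
    have h3 : (T * P) i j = T.mulVec (b j) i := by
      simp only [Matrix.mul_apply, Matrix.mulVec, dotProduct]
      exact Finset.sum_congr rfl fun k _ => by rw [hPij]
    rw [h3, hkey, hPij]
    simp [mul_comm]
  refine ⟨P, hdet, d, ?_⟩
  rw [Matrix.mul_assoc, hTP, ← Matrix.mul_assoc, Matrix.nonsing_inv_mul P hdet, Matrix.one_mul]

lemma aux_spectrum {N : ℕ} (T : Matrix (Fin N) (Fin N) ℂ) (s : Finset ℂ)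
    (h0 : Polynomial.aeval T (∏ μ ∈ s, (Polynomial.X - Polynomial.C μ)) = 0)
    {z : ℂ} (hz : z ∈ spectrum ℂ T) : z ∈ s := by
  classical
  set p : Polynomial ℂ := ∏ μ ∈ s, (Polynomial.X - Polynomial.C μ) with hp
  set f : Module.End ℂ (Fin N → ℂ) := Matrix.toLinAlgEquiv' T with hf
  have hz' : z ∈ spectrum ℂ f := by
    rwa [hf, AlgEquiv.spectrum_eq]
  have hev : f.HasEigenvalue z := Module.End.hasEigenvalue_iff_mem_spectrum.mpr hz'
  obtain ⟨v, hv⟩ := hev.exists_hasEigenvector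
  have h0' : Polynomial.aeval f p = 0 := by
    have h := Polynomial.aeval_algHom_apply
      (Matrix.toLinAlgEquiv' (R := ℂ) (n := Fin N)).toAlgHom T p
    rw [h0, map_zero] at h
    exact h
  have happ : ∀ q : Polynomial ℂ, (Polynomial.aeval f q) v = q.eval z • v := by
    intro q
    induction q using Polynomial.induction_on' with
    | add a b ha hb => simp [ha, hb, add_smul]
    | monomial n a =>
      simp [Polynomial.aeval_monomial, Module.End.mul_apply, Module.algebraMap_end_apply,
        hv.pow_apply, smul_smul, mul_comm]
  have hzero : p.eval z • v = 0 := by rw [← happ, h0']; simp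
  have hev0 : p.eval z = 0 := by
    by_contra hne
    exact hv.2 (by simpa [hne] using congrArg (fun w => (p.eval z)⁻¹ • w) hzero)
  rw [hp, Polynomial.eval_prod] at hev0
  obtain ⟨μ, hμs, hμ⟩ := Finset.prod_eq_zero_iff.mp hev0
  simp only [Polynomial.eval_sub, Polynomial.eval_X, Polynomial.eval_C, sub_eq_zero] at hμ
  rwa [hμ]

theorem stmt_10 (N : ℕ) (A : Matrix (Fin N) (Fin N) ℝ) :
    (∃ M : ℕ, N ≤ M ∧
        ∃ B : Matrix (Fin M) (Fin N) ℂ, ∃ C : Matrix (Fin N) (Fin M) ℂ,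
          B.rank = N ∧ C * B = 1 ∧
          (B * A.map Complex.ofReal * C)ᴴ = -(B * A.map Complex.ofReal * C))
      ↔ ((∃ P : Matrix (Fin N) (Fin N) ℂ, IsUnit P.det ∧
            ∃ d : Fin N → ℂ, P⁻¹ * A.map Complex.ofReal * P = Matrix.diagonal d) ∧
          ∀ z ∈ spectrum ℂ (A.map Complex.ofReal), z.re = 0) := by
  classical
  set A' : Matrix (Fin N) (Fin N) ℂ := A.map Complex.ofReal with hA'
  constructor
  · rintro ⟨M, hMN, B, C, hrank, hCB, hanti⟩
    set S : Matrix (Fin M) (Fin M) ℂ := B * A' * C with hS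
    have hSB : S * B = B * A' := by
      rw [hS, Matrix.mul_assoc (B * A') C B, hCB, Matrix.mul_one]
    have hH : (Complex.I • S).IsHermitian := by
      rw [Matrix.IsHermitian, Matrix.conjTranspose_smul, hanti, Complex.star_def,
        Complex.conj_I, neg_smul, smul_neg, neg_neg]
    set U : Matrix (Fin M) (Fin M) ℂ := (hH.eigenvectorUnitary : Matrix (Fin M) (Fin M) ℂ)
      with hU
    have hUU : U * star U = 1 := (Matrix.mem_unitaryGroup_iff).mp hH.eigenvectorUnitary.2
    have hU'U : star U * U = 1 := (Matrix.mem_unitaryGroup_iff').mp hH.eigenvectorUnitary.2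
    set dS : Fin M → ℂ := fun i => -Complex.I * (hH.eigenvalues i : ℂ) with hdS
    have hSdecomp : S = U * Matrix.diagonal dS * star U := by
      have h1 := hH.spectral_theorem
      have h2 : S = (-Complex.I) • (Complex.I • S) := by
        rw [smul_smul]
        simp
      have h3 : Matrix.diagonal dS =
          (-Complex.I) • Matrix.diagonal (RCLike.ofReal ∘ hH.eigenvalues) := by
        rw [← Matrix.diagonal_smul]
        rfl
      rw [h2, h1, h3, Matrix.mul_smul, Matrix.smul_mul, Unitary.conjStarAlgAut_apply]
    have hSU : S * U = U * Matrix.diagonal dS := by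
      rw [hSdecomp, Matrix.mul_assoc, Matrix.mul_assoc, hU'U, Matrix.mul_one]
    set s : Finset ℂ := Finset.image dS Finset.univ with hs
    set p : Polynomial ℂ := ∏ μ ∈ s, (Polynomial.X - Polynomial.C μ) with hp
    have hsq : Squarefree p := by
      have hsep : p.Separable := by
        rw [hp]
        exact Polynomial.separable_prod_X_sub_C_iff'.mpr (Set.injOn_id _)
      exact hsep.squarefree
    have hevalzero : ∀ i, p.eval (dS i) = 0 := by
      intro i
      rw [hp, Polynomial.eval_prod]
      refine Finset.prod_eq_zero (Finset.mem_image_of_mem dS (Finset.mem_univ i)) ?_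
      simp
    have haevalD : Polynomial.aeval (Matrix.diagonal dS) p = 0 := by
      have hdiag := Polynomial.aeval_algHom_apply
        (Matrix.diagonalAlgHom (n := Fin M) (α := ℂ) ℂ) dS p
      have hpi : Polynomial.aeval dS p = 0 := by
        funext i
        have hev := Polynomial.aeval_algHom_apply
          (Pi.evalAlgHom ℂ (fun _ : Fin M => ℂ) i) dS p
        calc (Polynomial.aeval dS p) i
            = Polynomial.aeval (dS i) p := hev.symm
          _ = p.eval (dS i) := congrFun (Polynomial.coe_aeval_eq_eval (dS i)) p
          _ = 0 := hevalzero i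
      rw [hpi, map_zero] at hdiag
      simpa using hdiag
    have haevalS : Polynomial.aeval S p = 0 := by
      have h4 := aux_intertwine S (Matrix.diagonal dS) U hSU p
      rw [haevalD, Matrix.mul_zero] at h4
      calc Polynomial.aeval S p = Polynomial.aeval S p * (U * star U) := by
            rw [hUU, Matrix.mul_one]
        _ = (Polynomial.aeval S p * U) * star U := by rw [Matrix.mul_assoc]
        _ = 0 := by rw [h4, Matrix.zero_mul]
    have haevalA : Polynomial.aeval A' p = 0 := by
      have h5 := aux_intertwine S A' B hSB p
      rw [haevalS, Matrix.zero_mul] at h5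
      have h6 := congrArg (fun X => C * X) h5.symm
      simpa [← Matrix.mul_assoc, hCB] using h6
    refine ⟨aux_diag A' p hsq haevalA, ?_⟩
    intro z hz
    have hzs : z ∈ s := aux_spectrum A' s (hp ▸ haevalA) hz
    rw [hs] at hzs
    obtain ⟨i, -, hi⟩ := Finset.mem_image.mp hzs
    rw [← hi, hdS]
    simp
  · rintro ⟨⟨P, hP, d, hD⟩, hspec⟩
    have hPP : P * P⁻¹ = 1 := Matrix.mul_nonsing_inv P hP
    have hP'P : P⁻¹ * P = 1 := Matrix.nonsing_inv_mul P hP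
    let u : (Matrix (Fin N) (Fin N) ℂ)ˣ := ⟨P, P⁻¹, hPP, hP'P⟩
    have hPinvUnit : IsUnit (P⁻¹) := ⟨u⁻¹, rfl⟩
    refine ⟨N, le_refl N, P⁻¹, P, ?_, hPP, ?_⟩
    · rw [Matrix.rank_of_isUnit _ hPinvUnit, Fintype.card_fin]
    · rw [hD]
      have hmem : ∀ i, d i ∈ spectrum ℂ A' := by
        intro i
        have hconj := spectrum.units_conjugate' (R := ℂ) (a := A') (u := u)
        have hco : (↑u⁻¹ : Matrix (Fin N) (Fin N) ℂ) = P⁻¹ := rfl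
        have hco2 : (↑u : Matrix (Fin N) (Fin N) ℂ) = P := rfl
        rw [hco, hco2] at hconj
        rw [← hconj, hD, spectrum_diagonal]
        exact ⟨i, rfl⟩
      have hre : ∀ i, (d i).re = 0 := fun i => hspec _ (hmem i)
      have hsd : star d = fun i => -(d i) := by
        funext i
        have h := hre i
        apply Complex.ext <;> simp [h]
      rw [Matrix.diagonal_conjTranspose, hsd, Matrix.diagonal_neg]
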